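/- Define a sequence I_n(a,b,c,d,t) of rational functions by I₀ = 1, I₁ = (1−abcd)/((1−ac)(1−bc)(1−cd)(1−ad)(1−bd)), and for n ≥ 2 the recurrence I_n(a,b;c,d) = [c/((1−ac)(1−bc)(1−dc)(c−d))]·I_{n−1}(a,b;tc,d) + [d/((1−ad)(1−bd)(1−cd)(d−c))]·I_{n−1}(a,b;c,td). Then for all n ≥ 0, I_n(a,b;c,d) = ∏_{i=0}^{n−1} [(1−t^i ac)(1−t^i bc)(1−t^i cd)(1−t^i ad)(1−t^i bd)]^{−1} · ∏_{j=n−1}^{2n−2} (1−t^j abcd). -/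
import Mathlib

open Finset

noncomputable abbrev RatFunField : Type := FractionRing (MvPolynomial (Fin 5) ℚ)

noncomputable def rfVar (i : Fin 5) : RatFunField :=
  algebraMap (MvPolynomial (Fin 5) ℚ) RatFunField (MvPolynomial.X i)

lemma rf_ne_zero (p : MvPolynomial (Fin 5) ℚ)
    (h : MvPolynomial.eval (![0,0,1,0,1] : Fin 5 → ℚ) p ≠ 0) :
    algebraMap (MvPolynomial (Fin 5) ℚ) RatFunField p ≠ 0 := by
  intro hp
  have hp0 : p = 0 := by rwa [IsFractionRing.to_map_eq_zero_iff] at hp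
  exact h (by simp [hp0])

lemma nz_pair (e : ℕ) (i j : Fin 5)
    (h : MvPolynomial.eval (![0,0,1,0,1] : Fin 5 → ℚ) (MvPolynomial.X i * MvPolynomial.X j) = 0) :
    (1:RatFunField) - rfVar 4 ^ e * rfVar i * rfVar j ≠ 0 := by
  have := rf_ne_zero (1 - MvPolynomial.X 4 ^ e * MvPolynomial.X i * MvPolynomial.X j)
    (by have h' : (![0,0,1,0,1] : Fin 5 → ℚ) i * ![0,0,1,0,1] j = 0 := by simpa using h
        simp [mul_assoc, h'])
  simpa [rfVar, map_sub, map_mul, map_pow, map_one] using this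

lemma nz_diff (k l : ℕ) : rfVar 4 ^ k * rfVar 2 - rfVar 4 ^ l * rfVar 3 ≠ 0 := by
  have := rf_ne_zero
    (MvPolynomial.X 4 ^ k * MvPolynomial.X 2 - MvPolynomial.X 4 ^ l * MvPolynomial.X 3) (by simp)
  simpa [rfVar, map_sub, map_mul, map_pow] using this

lemma prod_shift {M : Type*} [CommMonoid M] (F G : ℕ → M) (h : ∀ i, F (i+1) = G i) (n : ℕ) :
    ∏ i ∈ range (n+1), F i = F 0 * ∏ i ∈ range n, G i := by
  rw [Finset.prod_range_succ', mul_comm]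
  exact congrArg _ (Finset.prod_congr rfl fun i _ => h i)

lemma cancel_aux {K : Type*} [Field K] (c x w z : K) (hx : x ≠ 0) :
    c / (x * w) * (x * z) = c / w * z := by
  rw [div_mul_eq_mul_div, div_mul_eq_mul_div,
    show c * (x * z) = x * (c * z) by ring, mul_div_mul_left _ _ hx]

lemma key {K : Type*} [Field K] (a b c d T Q P1 P2 P : K)
    (hP : P = ((1-a*c)*(1-b*c)*(1-c*d)) * ((1-T*a*d)*(1-T*b*d)) * P1)
    (hP' : P = ((1-a*d)*(1-b*d)*(1-c*d)) * ((1-T*a*c)*(1-T*b*c)) * P2)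
    (hPne : P ≠ 0) (hcd : c - d ≠ 0) :
    P⁻¹ * (Q * (1 - T^2*(a*b*c*d))) =
      c / ((1-a*c)*(1-b*c)*(1-d*c)*(c-d)) * (P1⁻¹ * Q)
    + d / ((1-a*d)*(1-b*d)*(1-c*d)*(d-c)) * (P2⁻¹ * Q) := by
  have H1 := hPne; rw [hP] at H1
  have H2 := hPne; rw [hP'] at H2
  simp only [mul_ne_zero_iff] at H1 H2
  obtain ⟨⟨⟨⟨hac, hbc⟩, hcd1⟩, hTad, hTbd⟩, hP1⟩ := H1
  obtain ⟨⟨⟨⟨had, hbd⟩, _⟩, hTac, hTbc⟩, hP2⟩ := H2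
  have hdc : d - c ≠ 0 := fun h => hcd (by rw [show c - d = -(d-c) by ring, h, neg_zero])
  have e1 : P1⁻¹ = (((1-a*c)*(1-b*c)*(1-c*d)) * ((1-T*a*d)*(1-T*b*d))) / P := by
    rw [eq_div_iff hPne, hP]; field_simp
  have e2 : P2⁻¹ = (((1-a*d)*(1-b*d)*(1-c*d)) * ((1-T*a*c)*(1-T*b*c))) / P := by
    rw [eq_div_iff hPne, hP']; field_simp
  have t1 : c / ((1-a*c)*(1-b*c)*(1-d*c)*(c-d)) * (P1⁻¹ * Q)
      = P⁻¹ * Q * (c * ((1-T*a*d)*(1-T*b*d)) / (c-d)) := by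
    rw [e1, mul_comm d c]
    calc c / ((1-a*c)*(1-b*c)*(1-c*d)*(c-d)) *
          ((((1-a*c)*(1-b*c)*(1-c*d)) * ((1-T*a*d)*(1-T*b*d))) / P * Q)
        = c / (((1-a*c)*(1-b*c)*(1-c*d))*(c-d)) *
          (((1-a*c)*(1-b*c)*(1-c*d)) * (((1-T*a*d)*(1-T*b*d)) * (P⁻¹ * Q))) := by
          rw [div_eq_mul_inv ((1-a*c)*(1-b*c)*(1-c*d)*((1-T*a*d)*(1-T*b*d)))]; ring_nf
      _ = c / (c-d) * (((1-T*a*d)*(1-T*b*d)) * (P⁻¹ * Q)) :=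
          cancel_aux _ _ _ _ (mul_ne_zero (mul_ne_zero hac hbc) hcd1)
      _ = P⁻¹ * Q * (c * ((1-T*a*d)*(1-T*b*d)) / (c-d)) := by
          rw [div_eq_mul_inv, div_eq_mul_inv]; ring
  have t2 : d / ((1-a*d)*(1-b*d)*(1-c*d)*(d-c)) * (P2⁻¹ * Q)
      = P⁻¹ * Q * (d * ((1-T*a*c)*(1-T*b*c)) / (d-c)) := by
    rw [e2]
    calc d / ((1-a*d)*(1-b*d)*(1-c*d)*(d-c)) *
          ((((1-a*d)*(1-b*d)*(1-c*d)) * ((1-T*a*c)*(1-T*b*c))) / P * Q)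
        = d / (((1-a*d)*(1-b*d)*(1-c*d))*(d-c)) *
          (((1-a*d)*(1-b*d)*(1-c*d)) * (((1-T*a*c)*(1-T*b*c)) * (P⁻¹ * Q))) := by
          rw [div_eq_mul_inv ((1-a*d)*(1-b*d)*(1-c*d)*((1-T*a*c)*(1-T*b*c)))]; ring_nf
      _ = d / (d-c) * (((1-T*a*c)*(1-T*b*c)) * (P⁻¹ * Q)) :=
          cancel_aux _ _ _ _ (mul_ne_zero (mul_ne_zero had hbd) hcd1)
      _ = P⁻¹ * Q * (d * ((1-T*a*c)*(1-T*b*c)) / (d-c)) := by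
          rw [div_eq_mul_inv, div_eq_mul_inv]; ring
  rw [t1, t2]
  have scalar : (1 : K) - T^2*(a*b*c*d)
      = c * ((1-T*a*d)*(1-T*b*d)) / (c-d) + d * ((1-T*a*c)*(1-T*b*c)) / (d-c) := by
    field_simp
    ring
  rw [show P⁻¹ * (Q * (1 - T^2*(a*b*c*d))) = P⁻¹ * Q * (1 - T^2*(a*b*c*d)) by ring,
    scalar, mul_add]

theorem gustafson_recurrence_solution
    (I : ℕ → RatFunField → RatFunField → RatFunField)
    (h0 : ∀ c d : RatFunField, I 0 c d = 1)
    (h1 : ∀ c d : RatFunField, I 1 c d =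
      (1 - rfVar 0 * rfVar 1 * c * d) /
        ((1 - rfVar 0 * c) * (1 - rfVar 1 * c) * (1 - c * d) *
          (1 - rfVar 0 * d) * (1 - rfVar 1 * d)))
    (hrec : ∀ n : ℕ, 2 ≤ n → ∀ c d : RatFunField, I n c d =
      c / ((1 - rfVar 0 * c) * (1 - rfVar 1 * c) * (1 - d * c) * (c - d)) *
          I (n - 1) (rfVar 4 * c) d
      + d / ((1 - rfVar 0 * d) * (1 - rfVar 1 * d) * (1 - c * d) * (d - c)) *
          I (n - 1) c (rfVar 4 * d)) :
    ∀ n : ℕ, I n (rfVar 2) (rfVar 3) =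
      (∏ i ∈ Finset.range n,
        ((1 - rfVar 4 ^ i * rfVar 0 * rfVar 2) * (1 - rfVar 4 ^ i * rfVar 1 * rfVar 2) *
         (1 - rfVar 4 ^ i * rfVar 2 * rfVar 3) * (1 - rfVar 4 ^ i * rfVar 0 * rfVar 3) *
         (1 - rfVar 4 ^ i * rfVar 1 * rfVar 3)))⁻¹ *
      ∏ j ∈ Finset.Ico (n - 1) (2 * n - 1),
        (1 - rfVar 4 ^ j * rfVar 0 * rfVar 1 * rfVar 2 * rfVar 3) := by
  have main : ∀ n k l : ℕ,
      I n (rfVar 4 ^ k * rfVar 2) (rfVar 4 ^ l * rfVar 3) =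
      (∏ i ∈ Finset.range n,
        ((1 - rfVar 4 ^ (k+i) * rfVar 0 * rfVar 2) * (1 - rfVar 4 ^ (k+i) * rfVar 1 * rfVar 2) *
         (1 - rfVar 4 ^ ((k+l)+i) * rfVar 2 * rfVar 3) * (1 - rfVar 4 ^ (l+i) * rfVar 0 * rfVar 3) *
         (1 - rfVar 4 ^ (l+i) * rfVar 1 * rfVar 3)))⁻¹ *
      ∏ j ∈ Finset.Ico (n-1) (2*n-1),
        (1 - rfVar 4 ^ ((k+l)+j) * rfVar 0 * rfVar 1 * rfVar 2 * rfVar 3) := by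
    intro n
    induction n with
    | zero => intro k l; simp [h0]
    | succ m ih =>
      rcases Nat.eq_zero_or_pos m with hm | hm
      · subst hm
        intro k l
        rw [h1, Finset.prod_range_one,
          show (0+1-1 : ℕ) = 0 by omega, show (2*(0+1)-1 : ℕ) = 1 by omega,
          ← Finset.range_eq_Ico, Finset.prod_range_one]
        have hD : (1 - rfVar 0 * (rfVar 4 ^ k * rfVar 2)) * (1 - rfVar 1 * (rfVar 4 ^ k * rfVar 2)) *
            (1 - rfVar 4 ^ k * rfVar 2 * (rfVar 4 ^ l * rfVar 3)) *
            (1 - rfVar 0 * (rfVar 4 ^ l * rfVar 3)) * (1 - rfVar 1 * (rfVar 4 ^ l * rfVar 3))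
            = (1 - rfVar 4 ^ (k+0) * rfVar 0 * rfVar 2) * (1 - rfVar 4 ^ (k+0) * rfVar 1 * rfVar 2) *
              (1 - rfVar 4 ^ ((k+l)+0) * rfVar 2 * rfVar 3) * (1 - rfVar 4 ^ (l+0) * rfVar 0 * rfVar 3) *
              (1 - rfVar 4 ^ (l+0) * rfVar 1 * rfVar 3) := by ring
        have hN : (1 - rfVar 0 * rfVar 1 * (rfVar 4 ^ k * rfVar 2) * (rfVar 4 ^ l * rfVar 3))
            = (1 - rfVar 4 ^ ((k+l)+0) * rfVar 0 * rfVar 1 * rfVar 2 * rfVar 3) := by ring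
        rw [hD, hN, div_eq_mul_inv, mul_comm]
      · obtain ⟨p, rfl⟩ : ∃ p, m = p + 1 := ⟨m - 1, by omega⟩
        intro k l
        rw [show p+1+1 = p+2 from rfl]
        rw [hrec (p+2) (by omega)]
        rw [show p+2-1 = p+1 by omega]
        rw [show rfVar 4 * (rfVar 4 ^ k * rfVar 2) = rfVar 4 ^ (k+1) * rfVar 2 by ring,
            show rfVar 4 * (rfVar 4 ^ l * rfVar 3) = rfVar 4 ^ (l+1) * rfVar 3 by ring]
        rw [ih (k+1) l, ih k (l+1)]
        symm
        -- abbreviations via plain terms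
        have hQ0 : ∏ j ∈ Finset.Ico (p+1) (2*(p+2)-1),
              (1 - rfVar 4 ^ (k+l+j) * rfVar 0 * rfVar 1 * rfVar 2 * rfVar 3)
            = (∏ i ∈ Finset.range (p+1),
                (1 - rfVar 4 ^ (k+l+(p+1+i)) * rfVar 0 * rfVar 1 * rfVar 2 * rfVar 3)) *
              (1 - (rfVar 4 ^ (p+1))^2 *
                (rfVar 0 * rfVar 1 * (rfVar 4 ^ k * rfVar 2) * (rfVar 4 ^ l * rfVar 3))) := by
          rw [Finset.prod_Ico_eq_prod_range, show 2*(p+2)-1-(p+1) = (p+1)+1 by omega,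
            Finset.prod_range_succ]
          congr 1
          ring
        have hQ1 : ∏ j ∈ Finset.Ico (p+1-1) (2*(p+1)-1),
              (1 - rfVar 4 ^ (k+1+l+j) * rfVar 0 * rfVar 1 * rfVar 2 * rfVar 3)
            = ∏ i ∈ Finset.range (p+1),
                (1 - rfVar 4 ^ (k+l+(p+1+i)) * rfVar 0 * rfVar 1 * rfVar 2 * rfVar 3) := by
          rw [show p+1-1 = p by omega, Finset.prod_Ico_eq_prod_range,
            show 2*(p+1)-1-p = p+1 by omega]
          exact Finset.prod_congr rfl fun i _ => by ring
        have hQ2 : ∏ j ∈ Finset.Ico (p+1-1) (2*(p+1)-1),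
              (1 - rfVar 4 ^ (k+(l+1)+j) * rfVar 0 * rfVar 1 * rfVar 2 * rfVar 3)
            = ∏ i ∈ Finset.range (p+1),
                (1 - rfVar 4 ^ (k+l+(p+1+i)) * rfVar 0 * rfVar 1 * rfVar 2 * rfVar 3) := by
          rw [show p+1-1 = p by omega, Finset.prod_Ico_eq_prod_range,
            show 2*(p+1)-1-p = p+1 by omega]
          exact Finset.prod_congr rfl fun i _ => by ring
        have hsplit : ∀ u v n : ℕ, (∏ i ∈ Finset.range n,
              ((1 - rfVar 4 ^ (u+i) * rfVar 0 * rfVar 2) * (1 - rfVar 4 ^ (u+i) * rfVar 1 * rfVar 2) *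
               (1 - rfVar 4 ^ (u+v+i) * rfVar 2 * rfVar 3) * (1 - rfVar 4 ^ (v+i) * rfVar 0 * rfVar 3) *
               (1 - rfVar 4 ^ (v+i) * rfVar 1 * rfVar 3)))
            = (∏ i ∈ Finset.range n,
                ((1 - rfVar 4 ^ (u+i) * rfVar 0 * rfVar 2) * (1 - rfVar 4 ^ (u+i) * rfVar 1 * rfVar 2))) *
              (∏ i ∈ Finset.range n, (1 - rfVar 4 ^ (u+v+i) * rfVar 2 * rfVar 3)) *
              (∏ i ∈ Finset.range n,
                ((1 - rfVar 4 ^ (v+i) * rfVar 0 * rfVar 3) * (1 - rfVar 4 ^ (v+i) * rfVar 1 * rfVar 3))) := by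
          intro u v n
          rw [← Finset.prod_mul_distrib, ← Finset.prod_mul_distrib]
          exact Finset.prod_congr rfl fun i _ => by ring
        have eA : (∏ i ∈ Finset.range (p+2),
              ((1 - rfVar 4 ^ (k+i) * rfVar 0 * rfVar 2) * (1 - rfVar 4 ^ (k+i) * rfVar 1 * rfVar 2)))
            = ((1 - rfVar 4 ^ (k+0) * rfVar 0 * rfVar 2) * (1 - rfVar 4 ^ (k+0) * rfVar 1 * rfVar 2)) *
              ∏ i ∈ Finset.range (p+1),
                ((1 - rfVar 4 ^ (k+1+i) * rfVar 0 * rfVar 2) * (1 - rfVar 4 ^ (k+1+i) * rfVar 1 * rfVar 2)) :=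
          prod_shift _ _ (fun i => by ring) (p+1)
        have eB1 : (∏ i ∈ Finset.range (p+2), (1 - rfVar 4 ^ (k+l+i) * rfVar 2 * rfVar 3))
            = (1 - rfVar 4 ^ (k+l+0) * rfVar 2 * rfVar 3) *
              ∏ i ∈ Finset.range (p+1), (1 - rfVar 4 ^ (k+1+l+i) * rfVar 2 * rfVar 3) :=
          prod_shift _ _ (fun i => by ring) (p+1)
        have eB2 : (∏ i ∈ Finset.range (p+2), (1 - rfVar 4 ^ (k+l+i) * rfVar 2 * rfVar 3))
            = (1 - rfVar 4 ^ (k+l+0) * rfVar 2 * rfVar 3) *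
              ∏ i ∈ Finset.range (p+1), (1 - rfVar 4 ^ (k+(l+1)+i) * rfVar 2 * rfVar 3) :=
          prod_shift _ _ (fun i => by ring) (p+1)
        have eC : (∏ i ∈ Finset.range (p+2),
              ((1 - rfVar 4 ^ (l+i) * rfVar 0 * rfVar 3) * (1 - rfVar 4 ^ (l+i) * rfVar 1 * rfVar 3)))
            = (∏ i ∈ Finset.range (p+1),
                ((1 - rfVar 4 ^ (l+i) * rfVar 0 * rfVar 3) * (1 - rfVar 4 ^ (l+i) * rfVar 1 * rfVar 3))) *
              ((1 - rfVar 4 ^ (l+(p+1)) * rfVar 0 * rfVar 3) * (1 - rfVar 4 ^ (l+(p+1)) * rfVar 1 * rfVar 3)) :=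
          Finset.prod_range_succ _ _
        have eC' : (∏ i ∈ Finset.range (p+2),
              ((1 - rfVar 4 ^ (l+i) * rfVar 0 * rfVar 3) * (1 - rfVar 4 ^ (l+i) * rfVar 1 * rfVar 3)))
            = ((1 - rfVar 4 ^ (l+0) * rfVar 0 * rfVar 3) * (1 - rfVar 4 ^ (l+0) * rfVar 1 * rfVar 3)) *
              ∏ i ∈ Finset.range (p+1),
                ((1 - rfVar 4 ^ (l+1+i) * rfVar 0 * rfVar 3) * (1 - rfVar 4 ^ (l+1+i) * rfVar 1 * rfVar 3)) :=
          prod_shift _ _ (fun i => by ring) (p+1)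
        have eA' : (∏ i ∈ Finset.range (p+2),
              ((1 - rfVar 4 ^ (k+i) * rfVar 0 * rfVar 2) * (1 - rfVar 4 ^ (k+i) * rfVar 1 * rfVar 2)))
            = (∏ i ∈ Finset.range (p+1),
                ((1 - rfVar 4 ^ (k+i) * rfVar 0 * rfVar 2) * (1 - rfVar 4 ^ (k+i) * rfVar 1 * rfVar 2))) *
              ((1 - rfVar 4 ^ (k+(p+1)) * rfVar 0 * rfVar 2) * (1 - rfVar 4 ^ (k+(p+1)) * rfVar 1 * rfVar 2)) :=
          Finset.prod_range_succ _ _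
        have hP : (∏ i ∈ Finset.range (p+2),
              ((1 - rfVar 4 ^ (k+i) * rfVar 0 * rfVar 2) * (1 - rfVar 4 ^ (k+i) * rfVar 1 * rfVar 2) *
               (1 - rfVar 4 ^ (k+l+i) * rfVar 2 * rfVar 3) * (1 - rfVar 4 ^ (l+i) * rfVar 0 * rfVar 3) *
               (1 - rfVar 4 ^ (l+i) * rfVar 1 * rfVar 3)))
            = ((1 - rfVar 0 * (rfVar 4 ^ k * rfVar 2)) * (1 - rfVar 1 * (rfVar 4 ^ k * rfVar 2)) *
                (1 - rfVar 4 ^ k * rfVar 2 * (rfVar 4 ^ l * rfVar 3))) *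
              ((1 - rfVar 4 ^ (p+1) * rfVar 0 * (rfVar 4 ^ l * rfVar 3)) *
               (1 - rfVar 4 ^ (p+1) * rfVar 1 * (rfVar 4 ^ l * rfVar 3))) *
              (∏ i ∈ Finset.range (p+1),
                ((1 - rfVar 4 ^ (k+1+i) * rfVar 0 * rfVar 2) * (1 - rfVar 4 ^ (k+1+i) * rfVar 1 * rfVar 2) *
                 (1 - rfVar 4 ^ (k+1+l+i) * rfVar 2 * rfVar 3) * (1 - rfVar 4 ^ (l+i) * rfVar 0 * rfVar 3) *
                 (1 - rfVar 4 ^ (l+i) * rfVar 1 * rfVar 3))) := by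
          rw [hsplit k l (p+2), hsplit (k+1) l (p+1), eA, eB1, eC]
          ring
        have hP' : (∏ i ∈ Finset.range (p+2),
              ((1 - rfVar 4 ^ (k+i) * rfVar 0 * rfVar 2) * (1 - rfVar 4 ^ (k+i) * rfVar 1 * rfVar 2) *
               (1 - rfVar 4 ^ (k+l+i) * rfVar 2 * rfVar 3) * (1 - rfVar 4 ^ (l+i) * rfVar 0 * rfVar 3) *
               (1 - rfVar 4 ^ (l+i) * rfVar 1 * rfVar 3)))
            = ((1 - rfVar 0 * (rfVar 4 ^ l * rfVar 3)) * (1 - rfVar 1 * (rfVar 4 ^ l * rfVar 3)) *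
                (1 - rfVar 4 ^ k * rfVar 2 * (rfVar 4 ^ l * rfVar 3))) *
              ((1 - rfVar 4 ^ (p+1) * rfVar 0 * (rfVar 4 ^ k * rfVar 2)) *
               (1 - rfVar 4 ^ (p+1) * rfVar 1 * (rfVar 4 ^ k * rfVar 2))) *
              (∏ i ∈ Finset.range (p+1),
                ((1 - rfVar 4 ^ (k+i) * rfVar 0 * rfVar 2) * (1 - rfVar 4 ^ (k+i) * rfVar 1 * rfVar 2) *
                 (1 - rfVar 4 ^ (k+(l+1)+i) * rfVar 2 * rfVar 3) * (1 - rfVar 4 ^ (l+1+i) * rfVar 0 * rfVar 3) *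
                 (1 - rfVar 4 ^ (l+1+i) * rfVar 1 * rfVar 3))) := by
          rw [hsplit k l (p+2), hsplit k (l+1) (p+1), eA', eB2, eC']
          ring
        have hPne : (∏ i ∈ Finset.range (p+2),
              ((1 - rfVar 4 ^ (k+i) * rfVar 0 * rfVar 2) * (1 - rfVar 4 ^ (k+i) * rfVar 1 * rfVar 2) *
               (1 - rfVar 4 ^ (k+l+i) * rfVar 2 * rfVar 3) * (1 - rfVar 4 ^ (l+i) * rfVar 0 * rfVar 3) *
               (1 - rfVar 4 ^ (l+i) * rfVar 1 * rfVar 3))) ≠ 0 :=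
          Finset.prod_ne_zero_iff.mpr fun i _ =>
            mul_ne_zero (mul_ne_zero (mul_ne_zero (mul_ne_zero
              (nz_pair _ 0 2 (by simp)) (nz_pair _ 1 2 (by simp)))
              (nz_pair _ 2 3 (by simp))) (nz_pair _ 0 3 (by simp))) (nz_pair _ 1 3 (by simp))
        rw [hQ0, hQ1, hQ2]
        exact key _ _ _ _ _ _ _ _ _ hP hP' hPne (nz_diff k l)
  intro n
  simpa only [pow_zero, one_mul, zero_add] using main n 0 0
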